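/- Let A ∈ ℝ^{n×n} be a symmetric matrix all of whose diagonal entries are zero. Then A is almost negative definite if and only if there exist n vectors y¹, …, yⁿ ∈ ℝⁿ such that A_{ij} = |yⁱ − yʲ|² for all 1 ≤ i, j ≤ n, where |·| denotes the Euclidean norm on ℝⁿ. -/

import Mathlib

/-- A symmetric real matrix `A` is *almost negative definite* if
`yᵀ A y ≤ 0` for every vector `y` whose coordinates sum to zero. -/
def IsAND {n : ℕ} (A : Matrix (Fin n) (Fin n) ℝ) : Prop :=
  A.IsSymm ∧ ∀ y : Fin n → ℝ, (∑ i, y i) = 0 →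
    ∑ i, ∑ j, y i * A i j * y j ≤ 0

theorem stmt1 {n : ℕ} (A : Matrix (Fin n) (Fin n) ℝ)
    (hsymm : A.IsSymm) (hdiag : ∀ i, A i i = 0) :
    IsAND A ↔
      ∃ y : Fin n → EuclideanSpace ℝ (Fin n),
        ∀ i j, A i j = ‖y i - y j‖ ^ 2 := by
  have hAs : ∀ i j, A j i = A i j := fun i j => hsymm.apply i j
  constructor
  · rintro ⟨-, hand⟩
    rcases Nat.eq_zero_or_pos n with hn | hn
    · subst hn
      exact ⟨fun _ => 0, fun i => i.elim0⟩
    set i0 : Fin n := ⟨0, hn⟩ with hi0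
    set M : Matrix (Fin n) (Fin n) ℝ := fun i j => (A i i0 + A j i0 - A i j) / 2 with hM
    have hMpsd : M.PosSemidef := by
      refine Matrix.posSemidef_iff_dotProduct_mulVec.mpr ⟨?_, ?_⟩
      · funext i j
        rw [Matrix.conjTranspose_apply, star_trivial]; simp only [hM]
        rw [hAs i j]; ring
      · intro x
        set S : ℝ := ∑ i, x i with hS
        set R : ℝ := ∑ i, x i * A i i0 with hR
        set Q : ℝ := ∑ i, ∑ j, x i * A i j * x j with hQ
        have key : dotProduct (star x) (M.mulVec x) = S * R - Q / 2 := by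
          have E1 : ∑ i, ∑ j, (x i * A i i0) * x j = R * S := by
            rw [hR, hS, Finset.sum_mul]
            exact Finset.sum_congr rfl fun i _ => (Finset.mul_sum _ _ _).symm
          have E2 : ∑ i, ∑ j, x i * (x j * A j i0) = S * R := by
            rw [hS, hR, Finset.sum_mul]
            exact Finset.sum_congr rfl fun i _ => (Finset.mul_sum _ _ _).symm
          simp only [star_trivial, dotProduct, Matrix.mulVec, dotProduct,
            Finset.mul_sum, hM]
          have split : ∀ i j : Fin n, x i * ((A i i0 + A j i0 - A i j) / 2 * x j)
              = ((x i * A i i0) * x j + x i * (x j * A j i0) - x i * A i j * x j) / 2 := by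
            intro i j; ring
          refine Eq.trans (Finset.sum_congr rfl fun i _ =>
            Finset.sum_congr rfl fun j _ => split i j) ?_
          simp_rw [← Finset.sum_div, Finset.sum_sub_distrib, Finset.sum_add_distrib]
          rw [E1, E2, ← hQ]
          ring
        rw [key]
        set y : Fin n → ℝ := fun i => x i - (if i = i0 then S else 0) with hy
        have hy0 : ∑ i, y i = 0 := by
          simp [hy, Finset.sum_sub_distrib, ← hS]
        have hyA : ∑ i, ∑ j, y i * A i j * y j = Q - 2 * S * R := by
          have expand : ∀ i j : Fin n, y i * A i j * y j
              = x i * A i j * x j - x i * A i j * (if j = i0 then S else 0)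
                - (if i = i0 then S else 0) * A i j * x j
                + (if i = i0 then S else 0) * A i j * (if j = i0 then S else 0) := by
            intro i j; simp only [hy]; ring
          simp_rw [expand, Finset.sum_add_distrib, Finset.sum_sub_distrib]
          have h1 : ∀ i : Fin n, ∑ j, x i * A i j * (if j = i0 then S else 0)
              = x i * A i i0 * S := by
            intro i; simp [mul_ite, mul_zero]
          have h2 : ∑ i, ∑ j, (if i = i0 then S else 0) * A i j * x j
              = S * ∑ j, x j * A j i0 := by
            rw [Finset.sum_comm]
            have : ∀ j : Fin n, ∑ i, (if i = i0 then S else 0) * A i j * x j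
                = S * (x j * A j i0) := by
              intro j
              simp only [ite_mul, zero_mul, Finset.sum_ite_eq', Finset.mem_univ, if_true]
              rw [hAs]; ring
            simp_rw [this, ← Finset.mul_sum]
          have h3 : ∑ i, ∑ j, (if i = i0 then S else 0) * A i j * (if j = i0 then S else 0)
              = 0 := by
            have : ∀ i j : Fin n, (if i = i0 then S else 0) * A i j * (if j = i0 then S else 0)
                = if i = i0 ∧ j = i0 then S * A i j * S else 0 := by
              intro i j
              by_cases h : i = i0 <;> by_cases h' : j = i0 <;> simp [h, h']
            simp [mul_ite, ite_mul, mul_zero, zero_mul, Finset.sum_ite_eq', hdiag]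
          simp_rw [h1, h2, h3]
          rw [← hQ]
          have h4 : ∑ i, x i * A i i0 * S = R * S := by rw [hR, Finset.sum_mul]
          rw [h4, ← hR]
          ring
        have := hand y hy0
        rw [hyA] at this
        linarith
    obtain ⟨B, hB⟩ : ∃ B : Matrix (Fin n) (Fin n) ℝ, M = B.conjTranspose * B := by
      open scoped MatrixOrder in exact CStarAlgebra.nonneg_iff_eq_star_mul_self.mp hMpsd.nonneg
    set v : Fin n → EuclideanSpace ℝ (Fin n) :=
      fun i => (WithLp.equiv 2 (Fin n → ℝ)).symm (fun k => B k i) with hv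
    have hinner : ∀ i j : Fin n, (inner ℝ (v i) (v j) : ℝ) = M i j := by
      intro i j
      rw [hB]
      simp [hv, PiLp.inner_apply, Matrix.mul_apply, Matrix.conjTranspose_apply,
        RCLike.inner_apply]
      exact Finset.sum_congr rfl fun _ _ => mul_comm _ _
    refine ⟨v, fun i j => ?_⟩
    have hnorm : ∀ i : Fin n, ‖v i‖ ^ 2 = M i i := by
      intro i; rw [← real_inner_self_eq_norm_sq, hinner]
    rw [norm_sub_sq_real, hnorm, hnorm, hinner]
    have e1 : M i i = A i i0 := by simp [hM, hdiag]
    have e2 : M j j = A j i0 := by simp [hM, hdiag]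
    rw [e1, e2, hM]
    ring
  · rintro ⟨y, hy⟩
    refine ⟨hsymm, fun c hc => ?_⟩
    have expand : ∀ i j : Fin n, c i * A i j * c j
        = c i * ‖y i‖^2 * c j - 2 * (c i * (inner ℝ (y i) (y j) : ℝ) * c j)
          + c i * ‖y j‖^2 * c j := by
      intro i j
      rw [hy i j, norm_sub_sq_real]
      ring
    simp_rw [expand, Finset.sum_add_distrib, Finset.sum_sub_distrib]
    have h1 : ∑ i, ∑ j, c i * ‖y i‖^2 * c j = 0 := by
      simp_rw [← Finset.mul_sum, hc, mul_zero, Finset.sum_const_zero]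
    have h2 : ∑ i, ∑ j, c i * ‖y j‖^2 * c j = 0 := by
      have : ∀ i : Fin n, ∑ j, c i * ‖y j‖^2 * c j = c i * ∑ j, ‖y j‖^2 * c j := by
        intro i; rw [Finset.mul_sum]; exact Finset.sum_congr rfl fun j _ => by ring
      simp_rw [this, ← Finset.sum_mul, hc, zero_mul]
    rw [h1, h2]
    set z : EuclideanSpace ℝ (Fin n) := ∑ i, c i • y i with hz
    have hzz : (inner ℝ z z : ℝ) = ∑ i, ∑ j, c i * (inner ℝ (y i) (y j) : ℝ) * c j := by
      rw [hz, sum_inner]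
      refine Finset.sum_congr rfl fun i _ => ?_
      rw [real_inner_smul_left, inner_sum, Finset.mul_sum]
      refine Finset.sum_congr rfl fun j _ => ?_
      rw [real_inner_smul_right]; ring
    have hsum : ∑ i, ∑ j, 2 * (c i * (inner ℝ (y i) (y j) : ℝ) * c j) = 2 * (inner ℝ z z : ℝ) := by
      rw [hzz, Finset.mul_sum]
      exact Finset.sum_congr rfl fun i _ => by rw [Finset.mul_sum]
    have hnn : (0 : ℝ) ≤ inner ℝ z z := real_inner_self_nonneg
    linarith
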